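/- arXiv:2402.00879 — 2 statements merged into one kernel-verified Lean document; each statement's English description precedes it below -/
import Mathlib

section
/- For all t ∈ [-1, 1], arccos(t)/π ≥ 0.87854 · (1 - t)/2. -/
lemma gw_nonneg_of_deriv {f g : ℝ → ℝ} (hf : ∀ x, HasDerivAt f (g x) x) (h0 : f 0 = 0)
    (hg : ∀ x, 0 ≤ x → 0 ≤ g x) : ∀ x, 0 ≤ x → 0 ≤ f x := by
  intro x hx
  have hm : MonotoneOn f (Set.Ici 0) :=
    monotoneOn_of_deriv_nonneg (convex_Ici 0)
      (fun y _ => (hf y).continuousAt.continuousWithinAt)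
      (fun y _ => (hf y).differentiableAt.differentiableWithinAt)
      (fun y hy => by
        rw [(hf y).deriv]
        exact hg y (le_of_lt (by simpa using hy)))
  calc (0:ℝ) = f 0 := h0.symm
    _ ≤ f x := hm Set.self_mem_Ici hx hx

lemma gw_sin_cubic : ∀ x : ℝ, 0 ≤ x → 0 ≤ Real.sin x - (x - x^3/6) := by
  refine gw_nonneg_of_deriv (g := fun x => Real.cos x - (1 - x^2/2)) (fun x => ?_) (by norm_num)
    (fun x _ => by linarith [Real.one_sub_sq_div_two_le_cos (x := x)])
  have h := (Real.hasDerivAt_sin x).sub ((hasDerivAt_id x).sub ((hasDerivAt_pow 3 x).div_const 6))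
  refine h.congr_deriv ?_
  push_cast; ring

lemma gw_cos_quartic : ∀ x : ℝ, 0 ≤ x → 0 ≤ (1 - x^2/2 + x^4/24) - Real.cos x := by
  refine gw_nonneg_of_deriv (g := fun x => Real.sin x - (x - x^3/6)) (fun x => ?_) (by norm_num)
    gw_sin_cubic
  have h := (((hasDerivAt_const x (1:ℝ)).sub ((hasDerivAt_pow 2 x).div_const 2)).add
    ((hasDerivAt_pow 4 x).div_const 24)).sub (Real.hasDerivAt_cos x)
  refine h.congr_deriv ?_
  push_cast; ring

lemma gw_sin_quintic : ∀ x : ℝ, 0 ≤ x → 0 ≤ (x - x^3/6 + x^5/120) - Real.sin x := by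
  refine gw_nonneg_of_deriv (g := fun x => (1 - x^2/2 + x^4/24) - Real.cos x) (fun x => ?_)
    (by norm_num) gw_cos_quartic
  have h := (((hasDerivAt_id x).sub ((hasDerivAt_pow 3 x).div_const 6)).add
    ((hasDerivAt_pow 5 x).div_const 120)).sub (Real.hasDerivAt_sin x)
  refine h.congr_deriv ?_
  push_cast; ring

lemma gw_cos_sextic : ∀ x : ℝ, 0 ≤ x → 0 ≤ Real.cos x - (1 - x^2/2 + x^4/24 - x^6/720) := by
  refine gw_nonneg_of_deriv (g := fun x => (x - x^3/6 + x^5/120) - Real.sin x) (fun x => ?_)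
    (by norm_num) gw_sin_quintic
  have h := (Real.hasDerivAt_cos x).sub ((((hasDerivAt_const x (1:ℝ)).sub
    ((hasDerivAt_pow 2 x).div_const 2)).add ((hasDerivAt_pow 4 x).div_const 24)).sub
    ((hasDerivAt_pow 6 x).div_const 720))
  refine h.congr_deriv ?_
  push_cast; ring

lemma gw_sin_septic : ∀ x : ℝ, 0 ≤ x → 0 ≤ Real.sin x - (x - x^3/6 + x^5/120 - x^7/5040) := by
  refine gw_nonneg_of_deriv (g := fun x => Real.cos x - (1 - x^2/2 + x^4/24 - x^6/720))
    (fun x => ?_) (by norm_num) gw_cos_sextic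
  have h := (Real.hasDerivAt_sin x).sub ((((hasDerivAt_id x).sub
    ((hasDerivAt_pow 3 x).div_const 6)).add ((hasDerivAt_pow 5 x).div_const 120)).sub
    ((hasDerivAt_pow 7 x).div_const 5040))
  refine h.congr_deriv ?_
  push_cast; ring

lemma gw_cos_octic : ∀ x : ℝ, 0 ≤ x →
    0 ≤ (1 - x^2/2 + x^4/24 - x^6/720 + x^8/40320) - Real.cos x := by
  refine gw_nonneg_of_deriv (g := fun x => Real.sin x - (x - x^3/6 + x^5/120 - x^7/5040))
    (fun x => ?_) (by norm_num) gw_sin_septic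
  have h := ((((hasDerivAt_const x (1:ℝ)).sub ((hasDerivAt_pow 2 x).div_const 2)).add
    ((hasDerivAt_pow 4 x).div_const 24)).sub ((hasDerivAt_pow 6 x).div_const 720)).add
    ((hasDerivAt_pow 8 x).div_const 40320) |>.sub (Real.hasDerivAt_cos x)
  refine h.congr_deriv ?_
  push_cast; ring

lemma gw_key (s : ℝ) (h0 : 0 ≤ s) (h1 : s ≤ 1.701593) :
    s ≤ 3.141592 * (1 - 0.43927 * (2 - s^2/2 + s^4/24 - s^6/720 + s^8/40320)) := by
  have hU : (0:ℝ) ≤ 1.701593 - s := by linarith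
  have T1 : (0:ℝ) ≤ (s - 0.8105)^2 := sq_nonneg _
  have T2 := mul_nonneg T1 hU
  have T3 := mul_nonneg T2 h0
  have T4 := mul_nonneg (mul_nonneg T2 hU) h0
  have T5 := mul_nonneg T4 h0
  have T6 := mul_nonneg T2 (pow_nonneg h0 4)
  have T7 := mul_nonneg T2 (pow_nonneg h0 5)
  nlinarith [T1, T2, T3, T4, T5, T6, T7]

theorem stmt_6 : ∀ t ∈ Set.Icc (-1 : ℝ) 1,
    Real.arccos t / Real.pi ≥ 0.87854 * ((1 - t) / 2) := by
  intro t ht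
  obtain ⟨h1, h2⟩ := ht
  have hθ0 : 0 ≤ Real.arccos t := Real.arccos_nonneg t
  have hθπ : Real.arccos t ≤ Real.pi := Real.arccos_le_pi t
  have hct : Real.cos (Real.arccos t) = t := Real.cos_arccos h1 h2
  set θ := Real.arccos t with hθdef
  rw [ge_iff_le, ← hct, le_div_iff₀ Real.pi_pos]
  have hπl := Real.pi_gt_d6
  have hπu := Real.pi_lt_d6
  rcases le_or_gt θ 1.44 with hc | hc
  · have hb := Real.one_sub_sq_div_two_le_cos (x := θ)
    have hcos1 := Real.cos_le_one θ
    have p1 : 0 ≤ (1 - Real.cos θ) * (3.141593 - Real.pi) :=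
      mul_nonneg (by linarith) (by linarith)
    have p2 : 0 ≤ θ * (1.44 - θ) := mul_nonneg hθ0 (by linarith)
    nlinarith [p1, p2, hb]
  · set s := Real.pi - θ with hsdef
    have hs0 : 0 ≤ s := by simp [hsdef]; linarith
    have hsU : s ≤ 1.701593 := by simp [hsdef]; linarith
    have hps : Real.cos s = -Real.cos θ := by
      rw [hsdef, Real.cos_pi_sub]
    have hq := gw_cos_octic s hs0
    have hkey := gw_key s hs0 hsU
    have hX : 0 ≤ 1 - 0.43927 * (2 - s^2/2 + s^4/24 - s^6/720 + s^8/40320) := by nlinarith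
    have hp1 : 0 ≤ (Real.pi - 3.141592) *
        (1 - 0.43927 * (2 - s^2/2 + s^4/24 - s^6/720 + s^8/40320)) :=
      mul_nonneg (by linarith) hX
    have hp2 : 0 ≤ Real.pi *
        ((1 - s^2/2 + s^4/24 - s^6/720 + s^8/40320) - Real.cos s) :=
      mul_nonneg Real.pi_pos.le hq
    nlinarith [hkey, hp1, hp2, hps]
end

section
/- Let W be a K×K matrix with nonnegative entries, let X be a PSD matrix with unit diagonal achieving SDP objective value S = ∑_{i≠j} W(i,j)(1 - X(i,j))/2, and suppose random hyperplane rounding produces signs y with P[y_i ≠ y_j] = arccos(X(i,j))/π. Then the expected cut value E[∑_{i≠j} W(i,j)·1{y_i ≠ y_j}] is at least 0.87854 · S. In particular it is at least 0.87854 times the optimal max-cut value. -/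
open Matrix

lemma sin_tangent {y : ℝ} (hy0 : 0 ≤ y) (hyπ : y ≤ Real.pi) :
    ∀ x, 0 ≤ x → x ≤ Real.pi → Real.sin x ≤ Real.sin y + Real.cos y * (x - y) := by
  have hder : ∀ t : ℝ, HasDerivAt (fun t => Real.sin y + Real.cos y * (t - y) - Real.sin t)
      (Real.cos y - Real.cos t) t := by
    intro t
    have h1 : HasDerivAt (fun t : ℝ => Real.sin y + Real.cos y * (t - y)) (Real.cos y) t := by
      simpa using (((hasDerivAt_id t).sub_const y).const_mul (Real.cos y)).const_add (Real.sin y)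
    exact h1.sub (Real.hasDerivAt_sin t)
  set g := fun t => Real.sin y + Real.cos y * (t - y) - Real.sin t with hg
  have hg_diff : Differentiable ℝ g := fun t => (hder t).differentiableAt
  have hgy : g y = 0 := by simp [hg]
  intro x hx0 hxπ
  have : 0 ≤ g x := by
    rcases le_total y x with h | h
    · have hmono : MonotoneOn g (Set.Icc y Real.pi) := by
        refine monotoneOn_of_deriv_nonneg (convex_Icc _ _)
          hg_diff.continuous.continuousOn hg_diff.differentiableOn ?_
        intro t ht
        rw [interior_Icc] at ht
        rw [(hder t).deriv]
        have := Real.cos_le_cos_of_nonneg_of_le_pi hy0 ht.2.le ht.1.le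
        linarith
      have := hmono ⟨le_refl y, hyπ⟩ ⟨h, hxπ⟩ h
      linarith [hgy]
    · have hanti : AntitoneOn g (Set.Icc 0 y) := by
        refine antitoneOn_of_deriv_nonpos (convex_Icc _ _)
          hg_diff.continuous.continuousOn hg_diff.differentiableOn ?_
        intro t ht
        rw [interior_Icc] at ht
        rw [(hder t).deriv]
        have := Real.cos_le_cos_of_nonneg_of_le_pi ht.1.le hyπ ht.2.le
        linarith
      have := hanti ⟨hx0, h⟩ ⟨hy0, le_refl y⟩ h
      linarith [hgy]
  simp only [hg] at this
  linarith

set_option maxHeartbeats 1000000 in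
lemma sincos_A0 : Real.sin 0.7603 ≤ 0.689144021 ∧
    0.724619343 ≤ Real.cos 0.7603 ∧ Real.cos 0.7603 ≤ 0.724634148 := by
  have hxabs : |(0.04751875 : ℝ)| = 0.04751875 := abs_of_nonneg (by norm_num)
  have hs := Real.sin_bound (x := 0.04751875) (by rw [hxabs]; norm_num)
  have hc := Real.cos_bound (x := 0.04751875) (by rw [hxabs]; norm_num)
  rw [hxabs, abs_le] at hs hc
  have hsl0 : (0.047500601 : ℝ) ≤ Real.sin 0.04751875 := by linarith [hs.1]
  have hsu0 : Real.sin 0.04751875 ≤ 0.047501133 := by linarith [hs.2]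
  have hcl0 : (0.998870718 : ℝ) ≤ Real.cos 0.04751875 := by linarith [hc.1]
  have hcu0 : Real.cos 0.04751875 ≤ 0.998871250 := by linarith [hc.2]
  have e1 : (0.0950375 : ℝ) = 2 * 0.04751875 := by norm_num
  have hs1e : Real.sin 0.0950375 = 2 * Real.sin 0.04751875 * Real.cos 0.04751875 := by rw [e1, Real.sin_two_mul]
  have hc1e : Real.cos 0.0950375 = Real.cos 0.04751875 ^ 2 - Real.sin 0.04751875 ^ 2 := by rw [e1, Real.cos_two_mul']
  have hsl1 : (0.094893918 : ℝ) ≤ Real.sin 0.0950375 := by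
    rw [hs1e]
    linarith [mul_nonneg (by linarith : (0:ℝ) ≤ Real.sin 0.04751875 - 0.047500601) (by linarith : (0:ℝ) ≤ Real.cos 0.04751875 - 0.998870718), hsl0, hcl0]
  have hsu1 : Real.sin 0.0950375 ≤ 0.094895033 := by
    rw [hs1e]
    linarith [mul_nonneg (by linarith : (0:ℝ) ≤ (0.047501133:ℝ) - Real.sin 0.04751875) (by linarith : (0:ℝ) ≤ Real.cos 0.04751875), hcu0]
  have hcl1 : (0.995486353 : ℝ) ≤ Real.cos 0.0950375 := by
    rw [hc1e]
    linarith [mul_nonneg (by linarith : (0:ℝ) ≤ Real.cos 0.04751875 - 0.998870718) (by linarith : (0:ℝ) ≤ Real.cos 0.04751875 - 0.998870718), mul_nonneg (by linarith : (0:ℝ) ≤ (0.047501133:ℝ) - Real.sin 0.04751875) (by linarith : (0:ℝ) ≤ Real.sin 0.04751875 + 0.047501133), hcl0]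
  have hcu1 : Real.cos 0.0950375 ≤ 0.995487467 := by
    rw [hc1e]
    linarith [mul_nonneg (by linarith : (0:ℝ) ≤ (0.998871250:ℝ) - Real.cos 0.04751875) (by linarith : (0:ℝ) ≤ (0.998871250:ℝ) + Real.cos 0.04751875), mul_nonneg (by linarith : (0:ℝ) ≤ Real.sin 0.04751875 - 0.047500601) (by linarith : (0:ℝ) ≤ Real.sin 0.04751875 + 0.047500601), hcu0]
  have e2 : (0.190075 : ℝ) = 2 * 0.0950375 := by norm_num
  have hs2e : Real.sin 0.190075 = 2 * Real.sin 0.0950375 * Real.cos 0.0950375 := by rw [e2, Real.sin_two_mul]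
  have hc2e : Real.cos 0.190075 = Real.cos 0.0950375 ^ 2 - Real.sin 0.0950375 ^ 2 := by rw [e2, Real.cos_two_mul']
  have hsl2 : (0.188931200 : ℝ) ≤ Real.sin 0.190075 := by
    rw [hs2e]
    linarith [mul_nonneg (by linarith : (0:ℝ) ≤ Real.sin 0.0950375 - 0.094893918) (by linarith : (0:ℝ) ≤ Real.cos 0.0950375 - 0.995486353), hsl1, hcl1]
  have hsu2 : Real.sin 0.190075 ≤ 0.188933633 := by
    rw [hs2e]
    linarith [mul_nonneg (by linarith : (0:ℝ) ≤ (0.094895033:ℝ) - Real.sin 0.0950375) (by linarith : (0:ℝ) ≤ Real.cos 0.0950375), hcu1]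
  have hcl2 : (0.981988011 : ℝ) ≤ Real.cos 0.190075 := by
    rw [hc2e]
    linarith [mul_nonneg (by linarith : (0:ℝ) ≤ Real.cos 0.0950375 - 0.995486353) (by linarith : (0:ℝ) ≤ Real.cos 0.0950375 - 0.995486353), mul_nonneg (by linarith : (0:ℝ) ≤ (0.094895033:ℝ) - Real.sin 0.0950375) (by linarith : (0:ℝ) ≤ Real.sin 0.0950375 + 0.094895033), hcl1]
  have hcu2 : Real.cos 0.190075 ≤ 0.981990442 := by
    rw [hc2e]
    linarith [mul_nonneg (by linarith : (0:ℝ) ≤ (0.995487467:ℝ) - Real.cos 0.0950375) (by linarith : (0:ℝ) ≤ (0.995487467:ℝ) + Real.cos 0.0950375), mul_nonneg (by linarith : (0:ℝ) ≤ Real.sin 0.0950375 - 0.094893918) (by linarith : (0:ℝ) ≤ Real.sin 0.0950375 + 0.094893918), hcu1]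
  have e3 : (0.38015 : ℝ) = 2 * 0.190075 := by norm_num
  have hs3e : Real.sin 0.38015 = 2 * Real.sin 0.190075 * Real.cos 0.190075 := by rw [e3, Real.sin_two_mul]
  have hc3e : Real.cos 0.38015 = Real.cos 0.190075 ^ 2 - Real.sin 0.190075 ^ 2 := by rw [e3, Real.cos_two_mul']
  have hsl3 : (0.371056346 : ℝ) ≤ Real.sin 0.38015 := by
    rw [hs3e]
    linarith [mul_nonneg (by linarith : (0:ℝ) ≤ Real.sin 0.190075 - 0.188931200) (by linarith : (0:ℝ) ≤ Real.cos 0.190075 - 0.981988011), hsl2, hcl2]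
  have hsu3 : Real.sin 0.38015 ≤ 0.371062044 := by
    rw [hs3e]
    linarith [mul_nonneg (by linarith : (0:ℝ) ≤ (0.188933633:ℝ) - Real.sin 0.190075) (by linarith : (0:ℝ) ≤ Real.cos 0.190075), hcu2]
  have hcl3 : (0.928604536 : ℝ) ≤ Real.cos 0.38015 := by
    rw [hc3e]
    linarith [mul_nonneg (by linarith : (0:ℝ) ≤ Real.cos 0.190075 - 0.981988011) (by linarith : (0:ℝ) ≤ Real.cos 0.190075 - 0.981988011), mul_nonneg (by linarith : (0:ℝ) ≤ (0.188933633:ℝ) - Real.sin 0.190075) (by linarith : (0:ℝ) ≤ Real.sin 0.190075 + 0.188933633), hcl2]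
  have hcu3 : Real.cos 0.38015 ≤ 0.928610230 := by
    rw [hc3e]
    linarith [mul_nonneg (by linarith : (0:ℝ) ≤ (0.981990442:ℝ) - Real.cos 0.190075) (by linarith : (0:ℝ) ≤ (0.981990442:ℝ) + Real.cos 0.190075), mul_nonneg (by linarith : (0:ℝ) ≤ Real.sin 0.190075 - 0.188931200) (by linarith : (0:ℝ) ≤ Real.sin 0.190075 + 0.188931200), hcu2]
  have e4 : (0.7603 : ℝ) = 2 * 0.38015 := by norm_num
  have hs4e : Real.sin 0.7603 = 2 * Real.sin 0.38015 * Real.cos 0.38015 := by rw [e4, Real.sin_two_mul]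
  have hc4e : Real.cos 0.7603 = Real.cos 0.38015 ^ 2 - Real.sin 0.38015 ^ 2 := by rw [e4, Real.cos_two_mul']
  have hsl4 : (0.689129212 : ℝ) ≤ Real.sin 0.7603 := by
    rw [hs4e]
    linarith [mul_nonneg (by linarith : (0:ℝ) ≤ Real.sin 0.38015 - 0.371056346) (by linarith : (0:ℝ) ≤ Real.cos 0.38015 - 0.928604536), hsl3, hcl3]
  have hsu4 : Real.sin 0.7603 ≤ 0.689144021 := by
    rw [hs4e]
    linarith [mul_nonneg (by linarith : (0:ℝ) ≤ (0.371062044:ℝ) - Real.sin 0.38015) (by linarith : (0:ℝ) ≤ Real.cos 0.38015), hcu3]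
  have hcl4 : (0.724619343 : ℝ) ≤ Real.cos 0.7603 := by
    rw [hc4e]
    linarith [mul_nonneg (by linarith : (0:ℝ) ≤ Real.cos 0.38015 - 0.928604536) (by linarith : (0:ℝ) ≤ Real.cos 0.38015 - 0.928604536), mul_nonneg (by linarith : (0:ℝ) ≤ (0.371062044:ℝ) - Real.sin 0.38015) (by linarith : (0:ℝ) ≤ Real.sin 0.38015 + 0.371062044), hcl3]
  have hcu4 : Real.cos 0.7603 ≤ 0.724634148 := by
    rw [hc4e]
    linarith [mul_nonneg (by linarith : (0:ℝ) ≤ (0.928610230:ℝ) - Real.cos 0.38015) (by linarith : (0:ℝ) ≤ (0.928610230:ℝ) + Real.cos 0.38015), mul_nonneg (by linarith : (0:ℝ) ≤ Real.sin 0.38015 - 0.371056346) (by linarith : (0:ℝ) ≤ Real.sin 0.38015 + 0.371056346), hcu3]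
  exact ⟨hsu4, hcl4, hcu4⟩

lemma jordan_inv {θ w : ℝ} (h : 2 / Real.pi * θ ≤ w) : θ ≤ Real.pi / 2 * w := by
  have hπ := Real.pi_pos
  have h2 := mul_le_mul_of_nonneg_left h (by positivity : (0:ℝ) ≤ Real.pi / 2)
  calc θ = Real.pi / 2 * (2 / Real.pi * θ) := by field_simp
  _ ≤ Real.pi / 2 * w := h2

lemma key (t : ℝ) (h1 : -1 ≤ t) (h2 : t ≤ 1) :
    0.87854 * (Real.pi / 2) * (1 - t) ≤ Real.arccos t := by
  have hπ1 := Real.pi_gt_d6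
  have hπ2 := Real.pi_lt_d6
  rw [Real.arccos_eq_pi_div_two_sub_arcsin]
  rcases le_total 0 t with ht | ht
  · -- t ≥ 0 : arcsin t ≤ (π/2) t
    have h3 : 2 / Real.pi * Real.arcsin t ≤ t := by
      have := Real.mul_le_sin (Real.arcsin_nonneg.2 ht) (Real.arcsin_le_pi_div_two t)
      rwa [Real.sin_arcsin h1 h2] at this
    have h4 := jordan_inv h3
    nlinarith [mul_nonneg (by linarith : (0:ℝ) ≤ 1 - t) Real.pi_pos.le]
  · -- t ≤ 0
    have hu0 : (0:ℝ) ≤ -t := by linarith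
    have hu1 : -t ≤ 1 := by linarith
    rw [show t = -(-t) by ring, Real.arcsin_neg]
    set u := -t with hudef
    -- goal : 0.87854 * (π/2) * (1 - -u) ≤ π/2 - -arcsin u
    rcases le_total u 0.5 with hc1 | hc1
    · have h5 : u ≤ Real.arcsin u := by
        have hsu := Real.sin_le hu0
        have h6 := Real.monotone_arcsin hsu
        rwa [Real.arcsin_sin (by linarith) (by linarith)] at h6
      nlinarith
    · rcases le_total u 0.97 with hc2 | hc2
      · -- tangent region
        set φ := Real.arcsin u with hφdef
        have hφ0 : 0 ≤ φ := Real.arcsin_nonneg.2 (by linarith)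
        have hφπ : φ ≤ Real.pi / 2 := Real.arcsin_le_pi_div_two u
        have hsinφ : Real.sin φ = u := Real.sin_arcsin (by linarith) hu1
        have htan := sin_tangent (y := 0.7603) (by norm_num) (by linarith) φ hφ0 (by linarith)
        rw [hsinφ] at htan
        obtain ⟨hsU, hcL, hcU⟩ := sincos_A0
        rcases le_total (0.7603 : ℝ) φ with hb | hb
        · nlinarith [mul_nonneg (by linarith : (0:ℝ) ≤ 0.724634148 - Real.cos 0.7603)
            (by linarith : (0:ℝ) ≤ φ - 0.7603)]
        · nlinarith [mul_nonneg (by linarith : (0:ℝ) ≤ Real.cos 0.7603 - 0.724619343)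
            (by linarith : (0:ℝ) ≤ 0.7603 - φ)]
      · -- u ≥ 0.97
        have hθ : Real.arccos u ≤ Real.pi / 2 * Real.sqrt (1 - u ^ 2) := by
          apply jordan_inv
          have := Real.mul_le_sin (Real.arccos_nonneg u) (Real.arccos_le_pi_div_two.2 (by linarith))
          rwa [Real.sin_arccos] at this
        have hB : (0:ℝ) ≤ 2 - 0.87854 * (1 + u) := by nlinarith
        have hw : Real.sqrt (1 - u ^ 2) ≤ 2 - 0.87854 * (1 + u) := by
          have h6 : (1 - u ^ 2) ≤ (2 - 0.87854 * (1 + u)) ^ 2 := by nlinarith [sq_nonneg (u - 0.97)]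
          calc Real.sqrt (1 - u ^ 2) ≤ Real.sqrt ((2 - 0.87854 * (1 + u)) ^ 2) :=
                Real.sqrt_le_sqrt h6
          _ = 2 - 0.87854 * (1 + u) := Real.sqrt_sq hB
        have harcsin : Real.arcsin u = Real.pi / 2 - Real.arccos u := by
          rw [Real.arccos_eq_pi_div_two_sub_arcsin]; ring
        nlinarith [mul_nonneg Real.pi_pos.le
          (by linarith : (0:ℝ) ≤ 2 - 0.87854 * (1 + u) - Real.sqrt (1 - u ^ 2))]

lemma entry_bound {K : ℕ} {X : Matrix (Fin K) (Fin K) ℝ} (hpsd : X.PosSemidef)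
    (hdiag : ∀ i, X i i = 1) (i j : Fin K) : -1 ≤ X i j ∧ X i j ≤ 1 := by
  have hsym : X j i = X i j := by
    have := hpsd.1.apply i j
    simpa using this
  by_cases hij : i = j
  · subst hij; rw [hdiag]; norm_num
  · have hminus := hpsd.dotProduct_mulVec_nonneg (Pi.single i (1:ℝ) - Pi.single j 1)
    have hplus := hpsd.dotProduct_mulVec_nonneg (Pi.single i (1:ℝ) + Pi.single j 1)
    simp only [star_trivial, Matrix.mulVec_sub, Matrix.mulVec_add, Matrix.mulVec_single,
      sub_dotProduct, add_dotProduct, dotProduct_sub, dotProduct_add,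
      single_dotProduct, mul_one, one_mul, Pi.sub_apply, Pi.add_apply,
      MulOpposite.op_one, one_smul, Matrix.col_apply] at hminus hplus
    constructor
    · nlinarith [hplus, hdiag i, hdiag j, hsym]
    · nlinarith [hminus, hdiag i, hdiag j, hsym]

lemma outer_psd {K : ℕ} (y : Fin K → ℝ) :
    (Matrix.of fun i j => y i * y j : Matrix (Fin K) (Fin K) ℝ).PosSemidef := by
  refine Matrix.PosSemidef.of_dotProduct_mulVec_nonneg ?_ ?_
  · ext i j
    simp [Matrix.conjTranspose_apply, mul_comm]
  · intro v
    have hq : star v ⬝ᵥ ((Matrix.of fun i j => y i * y j : Matrix (Fin K) (Fin K) ℝ) *ᵥ v)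
        = (∑ k, y k * v k) ^ 2 := by
      simp only [star_trivial, dotProduct, Matrix.mulVec, Matrix.of_apply]
      have : ∀ k, v k * (∑ l, (y k * y l) * v l) = (y k * v k) * (∑ l, y l * v l) := by
        intro k
        rw [Finset.mul_sum, Finset.mul_sum]
        apply Finset.sum_congr rfl
        intro l _
        ring
      calc ∑ k, v k * ∑ l, (y k * y l) * v l
          = ∑ k, (y k * v k) * (∑ l, y l * v l) := Finset.sum_congr rfl fun k _ => this k
        _ = (∑ k, y k * v k) * (∑ l, y l * v l) := by rw [← Finset.sum_mul]
        _ = (∑ k, y k * v k) ^ 2 := by ring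
    rw [hq]
    positivity

theorem stmt_7 (K : ℕ) (W X : Matrix (Fin K) (Fin K) ℝ)
    (hW : ∀ i j, 0 ≤ W i j) (hWdiag : ∀ k, W k k = 0)
    (hpsd : X.PosSemidef) (hdiag : ∀ i, X i i = 1)
    (S : ℝ)
    (hS : S = ∑ i : Fin K, ∑ j : Fin K, if i ≠ j then W i j * (1 - X i j) / 2 else 0)
    (hopt : ∀ X' : Matrix (Fin K) (Fin K) ℝ, X'.PosSemidef → (∀ i, X' i i = 1) →
      (∑ i : Fin K, ∑ j : Fin K, if i ≠ j then W i j * (1 - X' i j) / 2 else 0) ≤ S)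
    (P : Fin K → Fin K → ℝ)
    (hP : ∀ i j, P i j = Real.arccos (X i j) / Real.pi) :
    0.87854 * S ≤
      (∑ i : Fin K, ∑ j : Fin K, if i ≠ j then W i j * P i j else 0) ∧
    ∀ y : Fin K → ℝ, (∀ i, y i = -1 ∨ y i = 1) →
      0.87854 * (∑ i : Fin K, ∑ j : Fin K,
          if i ≠ j ∧ y i ≠ y j then W i j else 0) ≤
        (∑ i : Fin K, ∑ j : Fin K, if i ≠ j then W i j * P i j else 0) := by
  have hπ := Real.pi_pos
  have part1 : 0.87854 * S ≤
      (∑ i : Fin K, ∑ j : Fin K, if i ≠ j then W i j * P i j else 0) := by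
    rw [hS, Finset.mul_sum]
    refine Finset.sum_le_sum fun i _ => ?_
    rw [Finset.mul_sum]
    refine Finset.sum_le_sum fun j _ => ?_
    by_cases hij : i = j
    · simp [hij]
    · simp only [hij, ne_eq, not_false_eq_true, if_true, if_pos]
      obtain ⟨hl, hr⟩ := entry_bound hpsd hdiag i j
      have hk := key (X i j) hl hr
      rw [hP]
      have h7 : 0.87854 * ((1 - X i j) / 2) ≤ Real.arccos (X i j) / Real.pi := by
        rw [le_div_iff₀ hπ]
        nlinarith
      calc 0.87854 * (W i j * (1 - X i j) / 2)
          = W i j * (0.87854 * ((1 - X i j) / 2)) := by ring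
        _ ≤ W i j * (Real.arccos (X i j) / Real.pi) :=
            mul_le_mul_of_nonneg_left h7 (hW i j)
  refine ⟨part1, fun y hy => ?_⟩
  have hcut : (∑ i : Fin K, ∑ j : Fin K, if i ≠ j ∧ y i ≠ y j then W i j else 0) ≤ S := by
    have heq : (∑ i : Fin K, ∑ j : Fin K, if i ≠ j ∧ y i ≠ y j then W i j else 0)
        = ∑ i : Fin K, ∑ j : Fin K,
            if i ≠ j then W i j * (1 - (Matrix.of fun i j => y i * y j) i j) / 2 else 0 := by
      refine Finset.sum_congr rfl fun i _ => Finset.sum_congr rfl fun j _ => ?_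
      by_cases hij : i = j
      · simp [hij]
      · rcases hy i with hi | hi <;> rcases hy j with hj | hj <;>
          simp [hij, Matrix.of_apply, hi, hj] <;> norm_num
    rw [heq]
    refine hopt _ (outer_psd y) fun i => ?_
    rcases hy i with hi | hi <;> simp [Matrix.of_apply, hi] <;> norm_num
  calc 0.87854 * (∑ i : Fin K, ∑ j : Fin K, if i ≠ j ∧ y i ≠ y j then W i j else 0)
      ≤ 0.87854 * S := by nlinarith
    _ ≤ _ := part1
end
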